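/- Assume γ > 3 and 0 < λ < 1, and set λ̂ := (γ−3)/(3γ−5). Then: (i) 0 < λ̂ < 1; (ii) 2 + (ℓ−3)(1−λ) > 0 if and only if λ > λ̂; and (iii) with P₆ := (2/(γ−3), (γ−1)/(3−γ)) and F_V, F_C, G_V, G_C the first-order partial derivatives of F and G evaluated at P₆, the Wronskian satisfies F_C·G_V − F_V·G_C > 0 and the discriminant satisfies (F_C + G_V)² − 4(F_C·G_V − F_V·G_C) = C₆²·(2 + (ℓ−3)(1−λ))², where C₆ := (γ−1)/(3−γ). -/

import Mathlib

set_option maxHeartbeats 1000000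


noncomputable def ell (γ : ℝ) : ℝ := 2 / (γ - 1)
noncomputable def Vstar (γ lam : ℝ) : ℝ := ell γ * (1 - lam)
noncomputable def k1 (γ lam : ℝ) : ℝ := (1 / ell γ - 1) * (lam - 1)
noncomputable def k0 (γ lam : ℝ) : ℝ := (lam - 1) / ell γ
noncomputable def Dfun (V C : ℝ) : ℝ := (1 + V) ^ 2 - C ^ 2
noncomputable def Gfun (γ lam V C : ℝ) : ℝ :=
  C ^ 2 * (V - Vstar γ lam) - V * (1 + V) * (lam + V)
noncomputable def Ffun (γ lam V C : ℝ) : ℝ :=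
  C * (C ^ 2 - (1 + V) ^ 2 + k1 γ lam * (1 + V) - k0 γ lam)

lemma derivF_V (γ lam V C : ℝ) :
    deriv (fun V => Ffun γ lam V C) V = C * (k1 γ lam - 2 * (1 + V)) := by
  have h1 : HasDerivAt (fun V : ℝ => 1 + V) 1 V := (hasDerivAt_id V).const_add 1
  have h2 := (((h1.pow 2).const_sub (C ^ 2)).add (h1.const_mul (k1 γ lam))).sub_const
      (k0 γ lam)
  have h3 := h2.const_mul C
  simp only [Ffun]
  simp only [Pi.add_def, Pi.pow_def] at h3
  rw [h3.deriv]; push_cast; ring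

lemma derivF_C (γ lam V C : ℝ) :
    deriv (fun C => Ffun γ lam V C) C
      = 3 * C ^ 2 - (1 + V) ^ 2 + k1 γ lam * (1 + V) - k0 γ lam := by
  have hin := (((hasDerivAt_pow 2 C).sub_const ((1 + V) ^ 2)).add_const
      (k1 γ lam * (1 + V))).sub_const (k0 γ lam)
  have h := (hasDerivAt_id C).mul hin
  simp only [Ffun]
  simp only [id_eq, Pi.mul_def] at h
  rw [h.deriv]; push_cast; ring

lemma derivG_V (γ lam V C : ℝ) :
    deriv (fun V => Gfun γ lam V C) V
      = C ^ 2 - ((1 + V) * (lam + V) + V * (lam + V) + V * (1 + V)) := by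
  have h1 : HasDerivAt (fun V : ℝ => 1 + V) 1 V := (hasDerivAt_id V).const_add 1
  have hl : HasDerivAt (fun V : ℝ => lam + V) 1 V := (hasDerivAt_id V).const_add lam
  have ha := ((hasDerivAt_id V).sub_const (Vstar γ lam)).const_mul (C ^ 2)
  have hb := ((hasDerivAt_id V).mul h1).mul hl
  have h := ha.sub hb
  simp only [Gfun]
  simp only [id_eq, Pi.mul_def, Pi.sub_def] at h
  rw [h.deriv]; ring

lemma derivG_C (γ lam V C : ℝ) :
    deriv (fun C => Gfun γ lam V C) C = 2 * C * (V - Vstar γ lam) := by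
  have h := ((hasDerivAt_pow 2 C).mul_const (V - Vstar γ lam)).sub_const
      (V * (1 + V) * (lam + V))
  simp only [Gfun]
  rw [h.deriv]; push_cast; ring

/-- properties of `λ̂ = (γ−3)/(3γ−5)` and of the linearization at
`P₆` when `γ > 3` and `0 < λ < 1`. -/
theorem stmt_12 (γ lam : ℝ) (hγ : 3 < γ) (hlam0 : 0 < lam) (hlam1 : lam < 1) :
    let lamhat : ℝ := (γ - 3) / (3 * γ - 5)
    let V6 : ℝ := 2 / (γ - 3)
    let C6 : ℝ := (γ - 1) / (3 - γ)
    let FV : ℝ := deriv (fun V => Ffun γ lam V C6) V6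
    let FC : ℝ := deriv (fun C => Ffun γ lam V6 C) C6
    let GV : ℝ := deriv (fun V => Gfun γ lam V C6) V6
    let GC : ℝ := deriv (fun C => Gfun γ lam V6 C) C6
    (0 < lamhat ∧ lamhat < 1) ∧
    (0 < 2 + (ell γ - 3) * (1 - lam) ↔ lamhat < lam) ∧
    0 < FC * GV - FV * GC ∧
    (FC + GV) ^ 2 - 4 * (FC * GV - FV * GC)
      = C6 ^ 2 * (2 + (ell γ - 3) * (1 - lam)) ^ 2 := by
  intro lamhat V6 C6 FV FC GV GC
  have hg3 : (0:ℝ) < γ - 3 := by linarith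
  have hg1 : (0:ℝ) < γ - 1 := by linarith
  have h35 : (0:ℝ) < 3 * γ - 5 := by linarith
  have hne3 : γ - 3 ≠ 0 := ne_of_gt hg3
  have hne3' : (3:ℝ) - γ ≠ 0 := by intro h; apply hne3; linarith
  have hne1 : γ - 1 ≠ 0 := ne_of_gt hg1
  have hFV : FV = C6 * (k1 γ lam - 2 * (1 + V6)) := derivF_V γ lam V6 C6
  have hFC : FC = 3 * C6 ^ 2 - (1 + V6) ^ 2 + k1 γ lam * (1 + V6) - k0 γ lam :=
    derivF_C γ lam V6 C6
  have hGV : GV = C6 ^ 2 - ((1 + V6) * (lam + V6) + V6 * (lam + V6) + V6 * (1 + V6)) :=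
    derivG_V γ lam V6 C6
  have hGC : GC = 2 * C6 * (V6 - Vstar γ lam) := derivG_C γ lam V6 C6
  have hu1 : 1 < (γ - 1) / (γ - 3) := by rw [lt_div_iff₀ hg3]; linarith
  have hu0 : 0 < (γ - 1) / (γ - 3) := by positivity
  refine ⟨⟨div_pos hg3 h35, (div_lt_one h35).2 (by linarith)⟩, ?_, ?_, ?_⟩
  · have heq : 2 + (ell γ - 3) * (1 - lam) = ((3 * γ - 5) * lam - (γ - 3)) / (γ - 1) := by
      simp only [ell]; field_simp; ring
    rw [heq]
    constructor
    · intro h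
      have h' : 0 < (3 * γ - 5) * lam - (γ - 3) := by
        by_contra hc
        push_neg at hc
        have h2 := mul_pos h hg1
        rw [div_mul_cancel₀ _ hne1] at h2
        linarith
      rw [div_lt_iff₀ h35]
      linarith
    · intro h
      rw [div_lt_iff₀ h35] at h
      apply div_pos _ hg1
      linarith
  · have hW : FC * GV - FV * GC
        = 2 * ((γ - 1) / (γ - 3)) * (1 - lam) * (2 * ((γ - 1) / (γ - 3)) - 1 + lam) := by
      rw [hFV, hFC, hGV, hGC]
      simp only [ell, Vstar, k1, k0, V6, C6]
      field_simp
      ring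
    rw [hW]
    have : 0 < 2 * ((γ - 1) / (γ - 3)) - 1 + lam := by nlinarith
    have h1l : 0 < 1 - lam := by linarith
    positivity
  · rw [hFV, hFC, hGV, hGC]
    simp only [ell, Vstar, k1, k0, V6, C6]
    field_simp
    ring
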